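/- The product ⋆ on ℤ⟨z_2,z_3⟩ is associative: (w ⋆ w') ⋆ w'' = w ⋆ (w' ⋆ w'') for all w, w', w'' in ℤ⟨z_2,z_3⟩. -/

import Mathlib

/-- A word in `ℤ⟨z₂,z₃⟩`, recorded as its list of indices (each `2` or `3`). -/
def IsWord23 (w : List ℕ) : Prop := ∀ k ∈ w, k = 2 ∨ k = 3

/-- Auxiliary star product on *reversed* words (the head of the list is the rightmost
letter `z_k` of the word), with values in the free `ℤ`-module on reversed words. -/
noncomputable def starAux : List ℕ → List ℕ → (List ℕ →₀ ℤ)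
  | [], v => Finsupp.single v 1
  | u, [] => Finsupp.single u 1
  | 2 :: u, v => Finsupp.mapDomain (2 :: ·) (starAux u v)
  | u, 2 :: v => Finsupp.mapDomain (2 :: ·) (starAux u v)
  | 3 :: u, 3 :: v =>
      Finsupp.mapDomain (3 :: ·) (starAux u (3 :: v)) +
      Finsupp.mapDomain (3 :: ·) (starAux (3 :: u) v) +
      Finsupp.mapDomain (fun l => 2 :: 2 :: 2 :: l) (starAux u v)
  | _, _ => 0
termination_by u v => u.length + v.length

/-- The star product of two words of `ℤ⟨z₂,z₃⟩` (written in natural left-to-right order),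
as a `ℤ`-linear combination of words. -/
noncomputable def starW (u v : List ℕ) : List ℕ →₀ ℤ :=
  Finsupp.mapDomain List.reverse (starAux u.reverse v.reverse)

/-- The `ℤ`-bilinear extension of the star product to the free `ℤ`-module on words. -/
noncomputable def starHS : (List ℕ →₀ ℤ) →ₗ[ℤ] (List ℕ →₀ ℤ) →ₗ[ℤ] (List ℕ →₀ ℤ) :=
  Finsupp.lsum ℤ fun u => LinearMap.toSpanSingleton ℤ _
    (Finsupp.lsum ℤ fun v => LinearMap.toSpanSingleton ℤ _ (starW u v))

lemma sA_nil_left (v : List ℕ) : starAux [] v = Finsupp.single v 1 := by rw [starAux]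
lemma sA_nil_right (u : List ℕ) : starAux u [] = Finsupp.single u 1 := by
  cases u with
  | nil => rw [starAux]
  | cons a u => rw [starAux] <;> simp
lemma sA_2cons (u v : List ℕ) (b : ℕ) :
    starAux (2::u) (b::v) = Finsupp.mapDomain (2 :: ·) (starAux u (b::v)) := by
  rw [starAux] <;> simp
lemma sA_cons2 (a : ℕ) (ha : a ≠ 2) (u v : List ℕ) :
    starAux (a::u) (2::v) = Finsupp.mapDomain (2 :: ·) (starAux (a::u) v) := by
  rw [starAux] <;> simp_all
lemma sA_33 (u v : List ℕ) : starAux (3::u) (3::v) =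
      Finsupp.mapDomain (3 :: ·) (starAux u (3 :: v)) +
      Finsupp.mapDomain (3 :: ·) (starAux (3 :: u) v) +
      Finsupp.mapDomain (fun l => 2 :: 2 :: 2 :: l) (starAux u v) := by
  rw [starAux]

lemma star2_left (u v : List ℕ) :
    starAux (2::u) v = Finsupp.mapDomain (2 :: ·) (starAux u v) := by
  cases v with
  | nil => rw [sA_nil_right, sA_nil_right, Finsupp.mapDomain_single]
  | cons b v => exact sA_2cons u v b

lemma star2_right (u v : List ℕ) :
    starAux u (2::v) = Finsupp.mapDomain (2 :: ·) (starAux u v) := by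
  induction u generalizing v with
  | nil => rw [sA_nil_left, sA_nil_left, Finsupp.mapDomain_single]
  | cons a u ih =>
    by_cases ha : a = 2
    · subst ha
      rw [sA_2cons, ih, star2_left]
    · rw [sA_cons2 a ha]

/-- The word `2 2 2 ·` mapDomain as iterated `2 ::`. -/
lemma m222_eq (x : List ℕ →₀ ℤ) :
    Finsupp.mapDomain (fun l => 2 :: 2 :: 2 :: (l : List ℕ)) x =
      Finsupp.mapDomain (2 :: ·) (Finsupp.mapDomain (2 :: ·)
        (Finsupp.mapDomain ((2 : ℕ) :: ·) x)) := by
  rw [← Finsupp.mapDomain_comp, ← Finsupp.mapDomain_comp]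
  rfl

lemma mapDomain_sub (f : List ℕ → List ℕ) (x y : List ℕ →₀ ℤ) :
    Finsupp.mapDomain f (x - y) = Finsupp.mapDomain f x - Finsupp.mapDomain f y :=
  map_sub (Finsupp.lmapDomain ℤ ℤ f) x y

/-! ### The bilinear extension and one-sided products -/

noncomputable def Astar : (List ℕ →₀ ℤ) →ₗ[ℤ] (List ℕ →₀ ℤ) →ₗ[ℤ] (List ℕ →₀ ℤ) :=
  Finsupp.lsum ℤ fun u => LinearMap.toSpanSingleton ℤ _
    (Finsupp.lsum ℤ fun v => LinearMap.toSpanSingleton ℤ _ (starAux u v))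

lemma Astar_single (u v : List ℕ) (c d : ℤ) :
    Astar (Finsupp.single u c) (Finsupp.single v d) = c • d • starAux u v := by
  simp [Astar, Finsupp.lsum_single, LinearMap.toSpanSingleton_apply, smul_comm d c]

noncomputable def B (x : List ℕ →₀ ℤ) (w : List ℕ) : List ℕ →₀ ℤ :=
  Astar x (Finsupp.single w 1)

noncomputable def C (u : List ℕ) (y : List ℕ →₀ ℤ) : List ℕ →₀ ℤ :=
  Astar (Finsupp.single u 1) y

lemma B_single (t : List ℕ) (c : ℤ) (w : List ℕ) :
    B (Finsupp.single t c) w = c • starAux t w := by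
  rw [B, Astar_single, one_smul]

lemma C_single (u t : List ℕ) (c : ℤ) :
    C u (Finsupp.single t c) = c • starAux u t := by
  rw [C, Astar_single, one_smul]

lemma B_zero (w : List ℕ) : B 0 w = 0 := by simp [B]
lemma B_add (x y : List ℕ →₀ ℤ) (w : List ℕ) : B (x + y) w = B x w + B y w := by
  simp [B]
lemma C_zero (u : List ℕ) : C u 0 = 0 := by simp [C]
lemma C_add (u : List ℕ) (x y : List ℕ →₀ ℤ) : C u (x + y) = C u x + C u y := by
  simp [C]

lemma B_nil (x : List ℕ →₀ ℤ) : B x [] = x := by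
  induction x using Finsupp.induction_linear with
  | zero => exact B_zero []
  | add f g hf hg => rw [B_add, hf, hg]
  | single a b => rw [B_single, sA_nil_right, Finsupp.smul_single, smul_eq_mul, mul_one]

lemma C_nil (y : List ℕ →₀ ℤ) : C [] y = y := by
  induction y using Finsupp.induction_linear with
  | zero => exact C_zero []
  | add f g hf hg => rw [C_add, hf, hg]
  | single a b => rw [C_single, sA_nil_left, Finsupp.smul_single, smul_eq_mul, mul_one]

lemma B_m2 (x : List ℕ →₀ ℤ) (w : List ℕ) :
    B (Finsupp.mapDomain ((2:ℕ) :: ·) x) w = Finsupp.mapDomain ((2:ℕ) :: ·) (B x w) := by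
  induction x using Finsupp.induction_linear with
  | zero => simp [B_zero]
  | add f g hf hg => rw [Finsupp.mapDomain_add, B_add, hf, hg, B_add, Finsupp.mapDomain_add]
  | single a b =>
      rw [Finsupp.mapDomain_single, B_single, B_single, star2_left, Finsupp.mapDomain_smul]

lemma B_cons2 (x : List ℕ →₀ ℤ) (w : List ℕ) :
    B x (2 :: w) = Finsupp.mapDomain ((2:ℕ) :: ·) (B x w) := by
  induction x using Finsupp.induction_linear with
  | zero => simp [B_zero]
  | add f g hf hg => rw [B_add, hf, hg, B_add, Finsupp.mapDomain_add]
  | single a b => rw [B_single, B_single, star2_right, Finsupp.mapDomain_smul]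

lemma C_m2 (u : List ℕ) (y : List ℕ →₀ ℤ) :
    C u (Finsupp.mapDomain ((2:ℕ) :: ·) y) = Finsupp.mapDomain ((2:ℕ) :: ·) (C u y) := by
  induction y using Finsupp.induction_linear with
  | zero => simp [C_zero]
  | add f g hf hg => rw [Finsupp.mapDomain_add, C_add, hf, hg, C_add, Finsupp.mapDomain_add]
  | single a b =>
      rw [Finsupp.mapDomain_single, C_single, C_single, star2_right, Finsupp.mapDomain_smul]

lemma C_cons2 (u : List ℕ) (y : List ℕ →₀ ℤ) :
    C (2 :: u) y = Finsupp.mapDomain ((2:ℕ) :: ·) (C u y) := by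
  induction y using Finsupp.induction_linear with
  | zero => simp [C_zero]
  | add f g hf hg => rw [C_add, hf, hg, C_add, Finsupp.mapDomain_add]
  | single a b => rw [C_single, C_single, star2_left, Finsupp.mapDomain_smul]

lemma B_m222 (x : List ℕ →₀ ℤ) (w : List ℕ) :
    B (Finsupp.mapDomain (fun l => 2 :: 2 :: 2 :: (l : List ℕ)) x) w =
      Finsupp.mapDomain (fun l => 2 :: 2 :: 2 :: (l : List ℕ)) (B x w) := by
  rw [m222_eq, B_m2, B_m2, B_m2, m222_eq]

lemma C_m222 (u : List ℕ) (y : List ℕ →₀ ℤ) :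
    C u (Finsupp.mapDomain (fun l => 2 :: 2 :: 2 :: (l : List ℕ)) y) =
      Finsupp.mapDomain (fun l => 2 :: 2 :: 2 :: (l : List ℕ)) (C u y) := by
  rw [m222_eq, C_m2, C_m2, C_m2, m222_eq]

lemma B_m3_3 (x : List ℕ →₀ ℤ) (w : List ℕ) :
    B (Finsupp.mapDomain ((3:ℕ) :: ·) x) (3 :: w) =
      Finsupp.mapDomain ((3:ℕ) :: ·) (B x (3 :: w)) +
      Finsupp.mapDomain ((3:ℕ) :: ·) (B (Finsupp.mapDomain ((3:ℕ) :: ·) x) w) +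
      Finsupp.mapDomain (fun l => 2 :: 2 :: 2 :: l) (B x w) := by
  induction x using Finsupp.induction_linear with
  | zero => simp [B_zero]
  | add f g hf hg =>
      simp only [Finsupp.mapDomain_add, B_add, hf, hg]
      abel
  | single a b =>
      simp only [Finsupp.mapDomain_single, B_single, sA_33, smul_add,
        Finsupp.mapDomain_smul]

lemma C_3_m3 (u : List ℕ) (y : List ℕ →₀ ℤ) :
    C (3 :: u) (Finsupp.mapDomain ((3:ℕ) :: ·) y) =
      Finsupp.mapDomain ((3:ℕ) :: ·) (C u (Finsupp.mapDomain ((3:ℕ) :: ·) y)) +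
      Finsupp.mapDomain ((3:ℕ) :: ·) (C (3 :: u) y) +
      Finsupp.mapDomain (fun l => 2 :: 2 :: 2 :: l) (C u y) := by
  induction y using Finsupp.induction_linear with
  | zero => simp [C_zero]
  | add f g hf hg =>
      simp only [Finsupp.mapDomain_add, C_add, hf, hg]
      abel
  | single a b =>
      simp only [Finsupp.mapDomain_single, C_single, sA_33, smul_add,
        Finsupp.mapDomain_smul]

lemma key (n : ℕ) : ∀ (u v w : List ℕ), u.length + v.length + w.length ≤ n →
    IsWord23 u → IsWord23 v → IsWord23 w →
    B (starAux u v) w = C u (starAux v w) := by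
  induction n with
  | zero =>
    intro u v w hlen _ _ _
    have hu : u = [] := List.eq_nil_of_length_eq_zero (by omega)
    have hv : v = [] := List.eq_nil_of_length_eq_zero (by omega)
    have hw : w = [] := List.eq_nil_of_length_eq_zero (by omega)
    subst hu; subst hv; subst hw
    rw [sA_nil_left, B_nil, C_nil]
  | succ n ih =>
    intro u v w hlen hu hv hw
    match u, v, w with
    | [], v, w => rw [sA_nil_left, B_single, one_smul, C_nil]
    | a::u, [], w => rw [sA_nil_right, sA_nil_left, B_single, one_smul, C_single, one_smul]
    | a::u, b::v, [] => rw [B_nil, sA_nil_right, C_single, one_smul]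
    | a::u', b::v', c::w' =>
      have hu' : IsWord23 u' := fun k hk => hu k (List.mem_cons_of_mem _ hk)
      have hv' : IsWord23 v' := fun k hk => hv k (List.mem_cons_of_mem _ hk)
      have hw' : IsWord23 w' := fun k hk => hw k (List.mem_cons_of_mem _ hk)
      have hlen' : u'.length + v'.length + w'.length + 3 ≤ n + 1 := by
        simpa [Nat.add_assoc, Nat.add_comm, Nat.add_left_comm] using hlen
      rcases hu a (List.mem_cons_self) with rfl | rfl
      · -- a = 2
        rw [star2_left, B_m2, ih u' (b::v') (c::w') (by first | (simp only [List.length_cons]; omega) | omega) hu' hv hw, C_cons2]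
      · rcases hv b (List.mem_cons_self) with rfl | rfl
        · -- b = 2
          rw [star2_right, B_m2, ih (3::u') v' (c::w') (by first | (simp only [List.length_cons]; omega) | omega) hu hv' hw,
            star2_left, C_m2]
        · rcases hw c (List.mem_cons_self) with rfl | rfl
          · -- c = 2
            rw [B_cons2, ih (3::u') (3::v') w' (by first | (simp only [List.length_cons]; omega) | omega) hu hv hw',
              star2_right, C_m2]
          · -- a = b = c = 3
            have ih1 : B (starAux u' (3::v')) (3::w') = C u' (starAux (3::v') (3::w')) :=
              ih _ _ _ (by first | (simp only [List.length_cons]; omega) | omega) hu' hv hw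
            have ih2 : B (starAux u' (3::v')) w' = C u' (starAux (3::v') w') :=
              ih _ _ _ (by first | (simp only [List.length_cons]; omega) | omega) hu' hv hw'
            have ih3 : B (starAux (3::u') v') (3::w') = C (3::u') (starAux v' (3::w')) :=
              ih _ _ _ (by first | (simp only [List.length_cons]; omega) | omega) hu hv' hw
            have ih4 : B (starAux (3::u') v') w' = C (3::u') (starAux v' w') :=
              ih _ _ _ (by first | (simp only [List.length_cons]; omega) | omega) hu hv' hw'
            have ih5 : B (starAux u' v') (3::w') = C u' (starAux v' (3::w')) :=
              ih _ _ _ (by first | (simp only [List.length_cons]; omega) | omega) hu' hv' hw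
            have ih6 : B (starAux u' v') w' = C u' (starAux v' w') :=
              ih _ _ _ (by first | (simp only [List.length_cons]; omega) | omega) hu' hv' hw'
            have ih7 : B (starAux (3::u') (3::v')) w' = C (3::u') (starAux (3::v') w') :=
              ih _ _ _ (by first | (simp only [List.length_cons]; omega) | omega) hu hv hw'
            have hA : B (Finsupp.mapDomain ((3:ℕ) :: ·) (starAux u' (3::v'))) w' +
                B (Finsupp.mapDomain ((3:ℕ) :: ·) (starAux (3::u') v')) w' +
                Finsupp.mapDomain (fun l => 2 :: 2 :: 2 :: l) (C u' (starAux v' w')) =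
                C (3::u') (starAux (3::v') w') := by
              rw [← ih7, sA_33, B_add, B_add, B_m222, ih6]
            have hB : C u' (starAux (3::v') (3::w')) =
                C u' (Finsupp.mapDomain ((3:ℕ) :: ·) (starAux v' (3::w'))) +
                C u' (Finsupp.mapDomain ((3:ℕ) :: ·) (starAux (3::v') w')) +
                Finsupp.mapDomain (fun l => 2 :: 2 :: 2 :: l) (C u' (starAux v' w')) := by
              rw [sA_33, C_add, C_add, C_m222]
            have hX2 : B (Finsupp.mapDomain ((3:ℕ) :: ·) (starAux (3::u') v')) w' =
                C (3::u') (starAux (3::v') w') -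
                Finsupp.mapDomain (fun l => 2 :: 2 :: 2 :: l) (C u' (starAux v' w')) -
                B (Finsupp.mapDomain ((3:ℕ) :: ·) (starAux u' (3::v'))) w' := by
              rw [eq_sub_iff_add_eq, eq_sub_iff_add_eq,
                add_comm (B (Finsupp.mapDomain ((3:ℕ) :: ·) (starAux (3::u') v')) w')]
              exact hA
            conv_lhs => rw [sA_33]
            rw [B_add, B_add, B_m3_3, B_m3_3, B_m222, ih1, ih2, ih3, ih4, ih5]
            conv_rhs => rw [sA_33 v' w']
            rw [C_add, C_add, C_3_m3, C_3_m3, C_m222, hB, hX2]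
            simp only [Finsupp.mapDomain_add, mapDomain_sub]
            abel

lemma word_induction {p : (List ℕ →₀ ℤ) → Prop} (h0 : p 0)
    (hadd : ∀ f g, p f → p g → p (f + g))
    (hsingle : ∀ u c, IsWord23 u → p (Finsupp.single u c))
    (x : List ℕ →₀ ℤ) (hx : ∀ w ∈ x.support, IsWord23 w) : p x := by
  revert hx
  induction x using Finsupp.induction with
  | zero => intro _; exact h0
  | single_add a b f haf hb ihf =>
    intro hsup
    have hsupp : (Finsupp.single a b + f).support =
        (Finsupp.single a b).support ∪ f.support := by
      apply Finsupp.support_add_eq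
      rw [Finsupp.support_single_ne_zero _ hb]
      simpa using Finset.disjoint_singleton_left.mpr haf
    refine hadd _ _ (hsingle a b ?_) (ihf ?_)
    · apply hsup
      rw [hsupp, Finsupp.support_single_ne_zero _ hb]
      simp
    · intro w hw
      apply hsup
      rw [hsupp]
      exact Finset.mem_union_right _ hw

lemma Astar_smul_left (c : ℤ) (x y : List ℕ →₀ ℤ) :
    Astar (c • x) y = c • Astar x y := by simp [map_smul]
lemma Astar_smul_right (c : ℤ) (x y : List ℕ →₀ ℤ) :
    Astar x (c • y) = c • Astar x y := by simp [map_smul]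
lemma single_eq_smul (u : List ℕ) (c : ℤ) :
    Finsupp.single u c = c • Finsupp.single u 1 := by simp [Finsupp.smul_single']

theorem Astar_assoc (a b c : List ℕ →₀ ℤ)
    (ha : ∀ w ∈ a.support, IsWord23 w) (hb : ∀ w ∈ b.support, IsWord23 w)
    (hc : ∀ w ∈ c.support, IsWord23 w) :
    Astar (Astar a b) c = Astar a (Astar b c) := by
  revert b c
  refine word_induction (p := fun a => ∀ b c : List ℕ →₀ ℤ, (∀ w ∈ b.support, IsWord23 w) →
    (∀ w ∈ c.support, IsWord23 w) → Astar (Astar a b) c = Astar a (Astar b c))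
    ?_ ?_ ?_ a ha
  · intro b c _ _; simp
  · intro f g hf hg b c hb hc
    simp only [map_add, LinearMap.add_apply, hf b c hb hc, hg b c hb hc]
  · intro u cu hu b c hb hc
    revert c
    refine word_induction (p := fun b => ∀ c : List ℕ →₀ ℤ, (∀ w ∈ c.support, IsWord23 w) →
      Astar (Astar (Finsupp.single u cu) b) c = Astar (Finsupp.single u cu) (Astar b c))
      ?_ ?_ ?_ b hb
    · intro c _; simp
    · intro f g hf hg c hc
      simp only [map_add, LinearMap.add_apply, hf c hc, hg c hc]
    · intro v cv hv c hc
      refine word_induction (p := fun c => Astar (Astar (Finsupp.single u cu)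
        (Finsupp.single v cv)) c = Astar (Finsupp.single u cu)
        (Astar (Finsupp.single v cv) c)) ?_ ?_ ?_ c hc
      · simp
      · intro f g hf hg
        simp only [map_add, hf, hg]
      · intro w cw hw
        have base : Astar (Astar (Finsupp.single u 1) (Finsupp.single v 1))
            (Finsupp.single w 1) =
            Astar (Finsupp.single u 1) (Astar (Finsupp.single v 1) (Finsupp.single w 1)) := by
          rw [Astar_single, one_smul, one_smul, Astar_single, one_smul, one_smul]
          exact key (u.length + v.length + w.length) u v w le_rfl hu hv hw
        rw [single_eq_smul u cu, single_eq_smul v cv, single_eq_smul w cw]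
        simp only [Astar_smul_left, Astar_smul_right, smul_smul]
        rw [base]
        module

lemma starHS_single (u v : List ℕ) (c d : ℤ) :
    starHS (Finsupp.single u c) (Finsupp.single v d) = c • d • starW u v := by
  simp [starHS, Finsupp.lsum_single, LinearMap.toSpanSingleton_apply, smul_comm d c]

lemma starHS_eq (a b : List ℕ →₀ ℤ) :
    starHS a b = Finsupp.mapDomain List.reverse
      (Astar (Finsupp.mapDomain List.reverse a) (Finsupp.mapDomain List.reverse b)) := by
  induction a using Finsupp.induction_linear with
  | zero => simp
  | add f g hf hg =>
    simp only [map_add, LinearMap.add_apply, Finsupp.mapDomain_add, hf, hg]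
  | single u c =>
    induction b using Finsupp.induction_linear with
    | zero => simp
    | add f g hf hg =>
      simp only [map_add, Finsupp.mapDomain_add, hf, hg]
    | single v d =>
      rw [starHS_single, Finsupp.mapDomain_single, Finsupp.mapDomain_single, Astar_single,
        starW]
      simp [Finsupp.mapDomain_smul]

lemma rev_rev (x : List ℕ →₀ ℤ) :
    Finsupp.mapDomain List.reverse (Finsupp.mapDomain List.reverse x) = x := by
  rw [← Finsupp.mapDomain_comp]
  have : (List.reverse ∘ List.reverse : List ℕ → List ℕ) = id := by
    funext l; simp
  rw [this, Finsupp.mapDomain_id]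

lemma supp_rev (a : List ℕ →₀ ℤ) (ha : ∀ w ∈ a.support, IsWord23 w) :
    ∀ w ∈ (Finsupp.mapDomain List.reverse a).support, IsWord23 w := by
  intro w hw
  have h := Finsupp.mapDomain_support hw
  rw [Finset.mem_image] at h
  obtain ⟨t, ht, rfl⟩ := h
  intro k hk
  exact ha t ht k (List.mem_reverse.mp hk)


/-- The star product on `ℤ⟨z₂,z₃⟩` is associative. -/
theorem star_assoc (a b c : List ℕ →₀ ℤ)
    (ha : ∀ w ∈ a.support, IsWord23 w) (hb : ∀ w ∈ b.support, IsWord23 w)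
    (hc : ∀ w ∈ c.support, IsWord23 w) :
    starHS (starHS a b) c = starHS a (starHS b c) := by
  rw [starHS_eq a b, starHS_eq _ c, rev_rev, starHS_eq b c, starHS_eq a _, rev_rev]
  exact congrArg _ (Astar_assoc _ _ _ (supp_rev a ha) (supp_rev b hb) (supp_rev c hc))
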